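/- For t ≥ 2, the colon ideal (J : x_1 x_2^{t−1} x_3^{t−1} x_4^t ⋯ x_n^t) equals ⟨x_1, x_2, x_3⟩, where J is the monomial ideal generated by {x^a : a ∈ Δ_{n,t}}; hence ⟨x_1,x_2,x_3⟩ is an associated prime of R/J. -/

import Mathlib

open MvPolynomial Finset

/-- The set `Δ_{n,t}`. -/
def Delta (n t : ℕ) : Set (Fin n → ℕ) :=
  {a | (∀ i, 1 ≤ a i ∧ a i ≤ t) ∧ ∑ i, a i = t * (n - 1)} ∪
  {a | ∃ i : Fin n, a = fun j => if j = i then 0 else t}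

section Aux

variable {k : Type*} [Field k] {n : ℕ}

lemma aux_prodXpow (a : Fin n → ℕ) :
    ∏ i, (X i : MvPolynomial (Fin n) k) ^ a i
      = monomial (Finsupp.equivFunOnFinite.symm a) 1 := by
  rw [← prod_X_pow_eq_monomial]
  symm
  apply Finset.prod_subset (Finset.subset_univ _)
  intro i _ hi
  rw [Finsupp.notMem_support_iff] at hi
  simp only [Finsupp.coe_equivFunOnFinite_symm] at hi ⊢
  rw [hi, pow_zero]

lemma aux_filter_not (hn : 3 ≤ n) :
    Finset.univ.filter (fun j : Fin n => ¬ 3 ≤ (j : ℕ)) =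
      ({⟨0, by omega⟩, ⟨1, by omega⟩, ⟨2, by omega⟩} : Finset (Fin n)) := by
  ext j
  simp only [Finset.mem_filter, Finset.mem_univ, true_and, Finset.mem_insert,
    Finset.mem_singleton, Fin.ext_iff]
  omega

lemma aux_card (hn : 3 ≤ n) :
    (Finset.univ.filter (fun j : Fin n => 3 ≤ (j : ℕ))).card = n - 3 := by
  have h := Finset.card_filter_add_card_filter_not
    (s := (Finset.univ : Finset (Fin n))) (p := fun j : Fin n => 3 ≤ (j : ℕ))
  rw [aux_filter_not hn] at h
  have h3 : ({⟨0, by omega⟩, ⟨1, by omega⟩, ⟨2, by omega⟩} : Finset (Fin n)).card = 3 := by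
    rw [Finset.card_insert_of_notMem (by simp [Fin.ext_iff]),
      Finset.card_insert_of_notMem (by simp [Fin.ext_iff]), Finset.card_singleton]
  rw [h3, Finset.card_univ, Fintype.card_fin] at h
  omega

lemma aux_split (hn : 3 ≤ n) {M : Type*} [CommMonoid M] (g : Fin n → M) :
    ∏ i, g i = g ⟨0, by omega⟩ * g ⟨1, by omega⟩ * g ⟨2, by omega⟩ *
      ∏ j ∈ Finset.univ.filter (fun j : Fin n => 3 ≤ (j : ℕ)), g j := by
  rw [← Finset.prod_filter_mul_prod_filter_not Finset.univ (fun j : Fin n => 3 ≤ (j : ℕ)) g,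
    aux_filter_not hn, mul_comm]
  congr 1
  rw [Finset.prod_insert (by simp [Fin.ext_iff]), Finset.prod_insert (by simp [Fin.ext_iff]),
    Finset.prod_singleton, mul_assoc]

lemma aux_split_add (hn : 3 ≤ n) (g : Fin n → ℕ) :
    ∑ i, g i = g ⟨0, by omega⟩ + g ⟨1, by omega⟩ + g ⟨2, by omega⟩ +
      ∑ j ∈ Finset.univ.filter (fun j : Fin n => 3 ≤ (j : ℕ)), g j := by
  rw [← Finset.sum_filter_add_sum_filter_not Finset.univ (fun j : Fin n => 3 ≤ (j : ℕ)) g,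
    aux_filter_not hn, add_comm]
  congr 1
  rw [Finset.sum_insert (by simp [Fin.ext_iff]), Finset.sum_insert (by simp [Fin.ext_iff]),
    Finset.sum_singleton, add_assoc]

end Aux

theorem stmt_6 (k : Type*) [Field k] (n t : ℕ) (hn : 3 ≤ n) (ht : 2 ≤ t) :
    (Ideal.span {m | ∃ a ∈ Delta n t,
        m = ∏ i, (X i : MvPolynomial (Fin n) k) ^ a i}).colon
      (Ideal.span {X (⟨0, by omega⟩ : Fin n) *
        X (⟨1, by omega⟩ : Fin n) ^ (t - 1) * X (⟨2, by omega⟩ : Fin n) ^ (t - 1) *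
        ∏ j ∈ Finset.univ.filter (fun j : Fin n => 3 ≤ (j : ℕ)),
          (X j : MvPolynomial (Fin n) k) ^ t})
      = Ideal.span {X (⟨0, by omega⟩ : Fin n), X ⟨1, by omega⟩,
          (X (⟨2, by omega⟩ : Fin n) : MvPolynomial (Fin n) k)} ∧
    IsAssociatedPrime
      (Ideal.span {X (⟨0, by omega⟩ : Fin n), X ⟨1, by omega⟩,
        (X (⟨2, by omega⟩ : Fin n) : MvPolynomial (Fin n) k)})
      (MvPolynomial (Fin n) k ⧸ Ideal.span {m | ∃ a ∈ Delta n t,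
        m = ∏ i, (X i : MvPolynomial (Fin n) k) ^ a i}) := by
  classical
  set i0 : Fin n := ⟨0, by omega⟩ with hi0def
  set i1 : Fin n := ⟨1, by omega⟩ with hi1def
  set i2 : Fin n := ⟨2, by omega⟩ with hi2def
  set J : Ideal (MvPolynomial (Fin n) k) := Ideal.span {m | ∃ a ∈ Delta n t,
      m = ∏ i, (X i : MvPolynomial (Fin n) k) ^ a i} with hJdef
  set P : Ideal (MvPolynomial (Fin n) k) := Ideal.span {X i0, X i1, X i2} with hPdef
  set f : MvPolynomial (Fin n) k := X i0 * X i1 ^ (t - 1) * X i2 ^ (t - 1) *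
      ∏ j ∈ Finset.univ.filter (fun j : Fin n => 3 ≤ (j : ℕ)), (X j : MvPolynomial (Fin n) k) ^ t
    with hfdef
  -- the pattern functions
  set pat : ℕ → ℕ → ℕ → Fin n → ℕ := fun v0 v1 v2 j =>
      if (j : ℕ) = 0 then v0 else if (j : ℕ) = 1 then v1 else if (j : ℕ) = 2 then v2 else t
    with hpatdef
  have hpat0 : ∀ v0 v1 v2, pat v0 v1 v2 i0 = v0 := by intro _ _ _; simp [hpatdef, hi0def]
  have hpat1 : ∀ v0 v1 v2, pat v0 v1 v2 i1 = v1 := by intro _ _ _; simp [hpatdef, hi1def]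
  have hpat2 : ∀ v0 v1 v2, pat v0 v1 v2 i2 = v2 := by intro _ _ _; simp [hpatdef, hi2def]
  have hpat_hi : ∀ v0 v1 v2 (j : Fin n), 3 ≤ (j : ℕ) → pat v0 v1 v2 j = t := by
    intro v0 v1 v2 j hj
    simp only [hpatdef]
    rw [if_neg (by omega), if_neg (by omega), if_neg (by omega)]
  have hpat_sum : ∀ v0 v1 v2, ∑ i, pat v0 v1 v2 i = v0 + v1 + v2 + (n - 3) * t := by
    intro v0 v1 v2
    rw [aux_split_add hn, Finset.sum_congr rfl
      (fun j hj => hpat_hi v0 v1 v2 j (by simpa using hj)), Finset.sum_const, smul_eq_mul,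
      aux_card hn]
    rw [show ((⟨0, by omega⟩ : Fin n)) = i0 from rfl, show ((⟨1, by omega⟩ : Fin n)) = i1 from rfl,
      show ((⟨2, by omega⟩ : Fin n)) = i2 from rfl, hpat0, hpat1, hpat2]
  have harith : ∀ v0 v1 v2 : ℕ, v0 + v1 + v2 = 2 * t →
      v0 + v1 + v2 + (n - 3) * t = t * (n - 1) := by
    intro v0 v1 v2 hv
    obtain ⟨V, hV⟩ : ∃ V, t * (n - 3) = V := ⟨_, rfl⟩
    have e : t * (n - 1) = t * 2 + V := by
      rw [← hV, ← Nat.mul_add]; congr 1; omega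
    rw [e, Nat.mul_comm (n - 3) t, hV]
    omega
  -- the products
  have hprod : ∀ v0 v1 v2 : ℕ, ∏ i, (X i : MvPolynomial (Fin n) k) ^ pat v0 v1 v2 i =
      X i0 ^ v0 * X i1 ^ v1 * X i2 ^ v2 *
        ∏ j ∈ Finset.univ.filter (fun j : Fin n => 3 ≤ (j : ℕ)),
          (X j : MvPolynomial (Fin n) k) ^ t := by
    intro v0 v1 v2
    rw [aux_split hn (fun i => (X i : MvPolynomial (Fin n) k) ^ pat v0 v1 v2 i)]
    rw [show ((⟨0, by omega⟩ : Fin n)) = i0 from rfl, show ((⟨1, by omega⟩ : Fin n)) = i1 from rfl,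
      show ((⟨2, by omega⟩ : Fin n)) = i2 from rfl, hpat0, hpat1, hpat2]
    congr 1
    exact Finset.prod_congr rfl fun j hj => by rw [hpat_hi v0 v1 v2 j (by simpa using hj)]
  have hf : f = monomial (Finsupp.equivFunOnFinite.symm (pat 1 (t - 1) (t - 1))) 1 := by
    rw [← aux_prodXpow, hprod 1 (t - 1) (t - 1), pow_one]
  -- membership criterion for J
  have hgenset : {m | ∃ a ∈ Delta n t, m = ∏ i, (X i : MvPolynomial (Fin n) k) ^ a i}
      = (fun s => monomial s (1 : k)) '' {s : Fin n →₀ ℕ | ⇑s ∈ Delta n t} := by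
    ext q
    constructor
    · rintro ⟨a, ha, rfl⟩
      refine ⟨Finsupp.equivFunOnFinite.symm a, ?_, (aux_prodXpow a).symm⟩
      show ⇑(Finsupp.equivFunOnFinite.symm a) ∈ Delta n t
      rwa [show ⇑(Finsupp.equivFunOnFinite.symm a) = a from rfl]
    · rintro ⟨s, hs, rfl⟩
      refine ⟨⇑s, hs, ?_⟩
      rw [aux_prodXpow]
      exact congrArg (fun u => monomial u (1 : k)) (Finsupp.equivFunOnFinite_symm_coe s).symm
  have hJmem : ∀ p : MvPolynomial (Fin n) k,
      p ∈ J ↔ ∀ m ∈ p.support, ∃ s : Fin n →₀ ℕ, (⇑s ∈ Delta n t) ∧ s ≤ m := by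
    intro p
    rw [hJdef, hgenset, mem_ideal_span_monomial_image]
    simp only [Set.mem_setOf_eq]
  have hvi0 : ∀ i : Fin n, (i : ℕ) = 0 → i = i0 := fun i h => Fin.ext (by rw [hi0def]; exact h)
  have hvi1 : ∀ i : Fin n, (i : ℕ) = 1 → i = i1 := fun i h => Fin.ext (by rw [hi1def]; exact h)
  have hvi2 : ∀ i : Fin n, (i : ℕ) = 2 → i = i2 := fun i h => Fin.ext (by rw [hi2def]; exact h)
  have hXmem : ∀ i : Fin n, (i : ℕ) ≤ 2 → X i ∈ P := by
    intro i hi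
    apply Ideal.subset_span
    have h3 : (i : ℕ) = 0 ∨ (i : ℕ) = 1 ∨ (i : ℕ) = 2 := by omega
    rcases h3 with h | h | h
    · left; exact congrArg X (hvi0 i h)
    · right; left; exact congrArg X (hvi1 i h)
    · right; right; exact congrArg X (hvi2 i h)
  -- delta membership of the shifted exponents
  have hdelta : ∀ v0 v1 v2 : ℕ, 1 ≤ v0 → v0 ≤ t → 1 ≤ v1 → v1 ≤ t → 1 ≤ v2 → v2 ≤ t →
      v0 + v1 + v2 = 2 * t → pat v0 v1 v2 ∈ Delta n t := by
    intro v0 v1 v2 h1 h2 h3 h4 h5 h6 hv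
    left
    constructor
    · intro i
      simp only [hpatdef]
      split_ifs <;> omega
    · rw [hpat_sum]; exact harith _ _ _ hv
  -- the colon ideal computation
  have hcolon : J.colon (Ideal.span {f}) = P := by
    apply le_antisymm
    · intro g hg
      rw [Ideal.mem_colon_span_singleton, hf] at hg
      have hPim : P = Ideal.span
          (X '' ({i0, i1, i2} : Set (Fin n)) : Set (MvPolynomial (Fin n) k)) := by
        rw [hPdef]; congr 1; simp [Set.image_insert_eq]
      rw [hPim, mem_ideal_span_X_image]
      intro m hm
      by_contra hcon
      push_neg at hcon
      have hm0 : m i0 = 0 := hcon i0 (by simp)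
      have hm1 : m i1 = 0 := hcon i1 (by simp)
      have hm2 : m i2 = 0 := hcon i2 (by simp)
      set bF : Fin n →₀ ℕ := Finsupp.equivFunOnFinite.symm (pat 1 (t - 1) (t - 1)) with hbF
      have hsupp : m + bF ∈ (g * monomial bF 1).support := by
        rw [mem_support_iff, coeff_mul_monomial, mul_one]
        exact mem_support_iff.mp hm
      obtain ⟨s, hsΔ, hle⟩ := (hJmem _).mp hg _ hsupp
      have hle' : ∀ i, s i ≤ m i + pat 1 (t - 1) (t - 1) i := by
        intro i
        have := Finsupp.le_def.mp hle i
        simpa [hbF] using this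
      rcases hsΔ with ⟨hs1, hs2⟩ | ⟨i, hi⟩
      · -- interior generator: sum too big
        have hbound : ∀ i, s i ≤ pat 1 (t - 1) (t - 1) i := by
          intro i
          have h := hle' i
          by_cases hc2 : (i : ℕ) ≤ 2
          · have hmi : m i = 0 := by
              have h3 : (i : ℕ) = 0 ∨ (i : ℕ) = 1 ∨ (i : ℕ) = 2 := by omega
              rcases h3 with hh | hh | hh
              · rw [hvi0 i hh]; exact hm0
              · rw [hvi1 i hh]; exact hm1
              · rw [hvi2 i hh]; exact hm2
            omega
          · rw [hpat_hi _ _ _ i (by omega)]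
            exact (hs1 i).2
        have hsum : ∑ i, s i ≤ ∑ i, pat 1 (t - 1) (t - 1) i :=
          Finset.sum_le_sum fun i _ => hbound i
        rw [hpat_sum, hs2] at hsum
        obtain ⟨V, hV⟩ : ∃ V, t * (n - 3) = V := ⟨_, rfl⟩
        have e : t * (n - 1) = t * 2 + V := by
          rw [← hV, ← Nat.mul_add]; congr 1; omega
        rw [e, Nat.mul_comm (n - 3) t, hV] at hsum
        omega
      · -- generator of type e_i
        by_cases hii : i = i0
        · subst hii
          have hs1v : s i1 = t := by
            have := congrFun hi i1
            rwa [if_neg (by simp [hi1def, hi0def, Fin.ext_iff])] at this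
          have h := hle' i1
          rw [hs1v, hm1, hpat1] at h
          omega
        · have hs0v : s i0 = t := by
            have := congrFun hi i0
            rwa [if_neg (fun hcon' => hii hcon'.symm)] at this
          have h := hle' i0
          rw [hs0v, hm0, hpat0] at h
          omega
    · -- P ≤ colon
      rw [hPdef, Ideal.span_le]
      have hmain : ∀ (iv : Fin n) (v0 v1 v2 : ℕ),
          Finsupp.single iv 1 + Finsupp.equivFunOnFinite.symm (pat 1 (t - 1) (t - 1))
            = Finsupp.equivFunOnFinite.symm (pat v0 v1 v2) →
          pat v0 v1 v2 ∈ Delta n t →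
          X iv ∈ (J.colon (Ideal.span {f}) : Set (MvPolynomial (Fin n) k)) := by
        intro iv v0 v1 v2 hsum hΔ
        rw [SetLike.mem_coe, Ideal.mem_colon_span_singleton, hf, ← pow_one (X iv),
          X_pow_eq_monomial, monomial_mul, one_mul, hsum]
        apply Ideal.subset_span
        exact ⟨pat v0 v1 v2, hΔ, (aux_prodXpow _).symm⟩
      rintro x (rfl | rfl | rfl)
      · refine hmain i0 2 (t - 1) (t - 1) ?_ (hdelta 2 (t - 1) (t - 1)
          (by omega) (by omega) (by omega) (by omega) (by omega) (by omega) (by omega))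
        ext j
        simp only [Finsupp.add_apply, Finsupp.single_apply,
          Finsupp.coe_equivFunOnFinite_symm, hpatdef, hi0def, Fin.ext_iff]
        split_ifs <;> omega
      · refine hmain i1 1 t (t - 1) ?_ (hdelta 1 t (t - 1)
          (by omega) (by omega) (by omega) (by omega) (by omega) (by omega) (by omega))
        ext j
        simp only [Finsupp.add_apply, Finsupp.single_apply,
          Finsupp.coe_equivFunOnFinite_symm, hpatdef, hi1def, Fin.ext_iff]
        split_ifs <;> omega
      · refine hmain i2 1 (t - 1) t ?_ (hdelta 1 (t - 1) t
          (by omega) (by omega) (by omega) (by omega) (by omega) (by omega) (by omega))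
        ext j
        simp only [Finsupp.add_apply, Finsupp.single_apply,
          Finsupp.coe_equivFunOnFinite_symm, hpatdef, hi2def, Fin.ext_iff]
        split_ifs <;> omega
  -- primality of P
  have hPprime : P.IsPrime := by
    set g : Fin n → MvPolynomial (Fin n) k := fun i => if (i : ℕ) ≤ 2 then 0 else X i with hgdef
    have hker : P = RingHom.ker (MvPolynomial.aeval (R := k) g) := by
      apply le_antisymm
      · rw [hPdef, Ideal.span_le]
        rintro x (rfl | rfl | rfl) <;>
          simp [RingHom.mem_ker, aeval_X, hgdef, hi0def, hi1def, hi2def]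
      · intro p hp
        have key : ∀ q : MvPolynomial (Fin n) k, q - MvPolynomial.aeval g q ∈ P := by
          intro q
          induction q using MvPolynomial.induction_on with
          | C a => rw [aeval_C, MvPolynomial.algebraMap_eq, sub_self]; exact P.zero_mem
          | add p q hp hq =>
            rw [map_add]
            have h := P.add_mem hp hq
            have e : p + q - (MvPolynomial.aeval g p + MvPolynomial.aeval g q)
                = (p - MvPolynomial.aeval g p) + (q - MvPolynomial.aeval g q) := by ring
            rw [e]; exact h
          | mul_X p i hp =>
            rw [map_mul, aeval_X]
            have e : p * X i - MvPolynomial.aeval g p * g i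
                = (p - MvPolynomial.aeval g p) * X i
                  + MvPolynomial.aeval g p * (X i - g i) := by ring
            rw [e]
            refine P.add_mem (P.mul_mem_right _ hp) ?_
            by_cases hc : (i : ℕ) ≤ 2
            · rw [hgdef]; simp only [if_pos hc, sub_zero]
              exact P.mul_mem_left _ (hXmem i hc)
            · rw [hgdef]; simp only [if_neg hc, sub_self, mul_zero]
              exact P.zero_mem
        have h := key p
        rw [RingHom.mem_ker] at hp
        rwa [hp, sub_zero] at h
    rw [hker]
    exact RingHom.ker_isPrime _
  refine ⟨hcolon, hPprime, ⟨Ideal.Quotient.mk J f, ?_⟩⟩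
  rw [← hPprime.radical, ← hcolon]
  congr 1
  ext r
  rw [Submodule.mem_colon_singleton, Submodule.mem_bot, Ideal.mem_colon_span_singleton]
  have e : r • (Ideal.Quotient.mk J f) = Ideal.Quotient.mk J (r * f) := rfl
  rw [e, Ideal.Quotient.eq_zero_iff_mem]
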